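/- (Double centralizer theorem, type C₂, long root, in Sp₄.) Let R be a commutative ring and let g ∈ Sp₄(R). Suppose that g commutes with each of the five matrices 1 + E₁₃, 1 + E₂₄, 1 + E₄₂, 1 + (E₁₂ − E₄₃), and 1 + (E₁₄ + E₂₃) (these are exactly the type C₂ root elements at parameter 1 that commute with x_{2e₁}(1) = 1 + E₁₃). Then there exist ω, t ∈ R with ω² = 1 such that g = ω • (1 + t • E₁₃); i.e. g is a central scalar matrix times an element of the long-root subgroup X_{2e₁}. -/

import Mathlib

open Matrix

/-- The 4×4 matrix unit over `R`, with rows and columns indexed by `Fin 2 ⊕ Fin 2`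
(so that `1,2,3,4` correspond to `inl 0, inl 1, inr 0, inr 1`). -/
def Esp (R : Type*) [CommRing R] (i j : Fin 2 ⊕ Fin 2) :
    Matrix (Fin 2 ⊕ Fin 2) (Fin 2 ⊕ Fin 2) R :=
  Matrix.single i j 1

/-- Double centralizer theorem, type `C₂`, long root, in `Sp₄`: if `g ∈ Sp₄(R)` commutes
with the five type `C₂` root elements at parameter 1 that commute with
`x_{2e₁}(1) = 1 + E₁₃`, namely `1 + E₁₃`, `1 + E₂₄`, `1 + E₄₂`, `1 + (E₁₂ - E₄₃)` and
`1 + (E₁₄ + E₂₃)`, then `g = ω • (1 + t • E₁₃)` for some `ω, t ∈ R` with `ω² = 1`. -/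
theorem double_centralizer_C2_long {R : Type*} [CommRing R]
    (g : Matrix (Fin 2 ⊕ Fin 2) (Fin 2 ⊕ Fin 2) R)
    (hg : g ∈ Matrix.symplecticGroup (Fin 2) R)
    (h1 : g * (1 + Esp R (.inl 0) (.inr 0)) = (1 + Esp R (.inl 0) (.inr 0)) * g)
    (h2 : g * (1 + Esp R (.inl 1) (.inr 1)) = (1 + Esp R (.inl 1) (.inr 1)) * g)
    (h3 : g * (1 + Esp R (.inr 1) (.inl 1)) = (1 + Esp R (.inr 1) (.inl 1)) * g)
    (h4 : g * (1 + (Esp R (.inl 0) (.inl 1) - Esp R (.inr 1) (.inr 0))) =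
      (1 + (Esp R (.inl 0) (.inl 1) - Esp R (.inr 1) (.inr 0))) * g)
    (h5 : g * (1 + (Esp R (.inl 0) (.inr 1) + Esp R (.inl 1) (.inr 0))) =
      (1 + (Esp R (.inl 0) (.inr 1) + Esp R (.inl 1) (.inr 0))) * g) :
    ∃ ω t : R, ω ^ 2 = 1 ∧ g = ω • (1 + t • Esp R (.inl 0) (.inr 0)) := by
  rw [SymplecticGroup.mem_iff] at hg
  have E1 := fun i j => congrFun (congrFun h1 i) j
  have E2 := fun i j => congrFun (congrFun h2 i) j
  have E3 := fun i j => congrFun (congrFun h3 i) j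
  have E4 := fun i j => congrFun (congrFun h4 i) j
  have a21 := E1 (.inl 1) (.inr 0)
  have a41 := E1 (.inr 1) (.inr 0)
  have a31 := E1 (.inl 0) (.inl 0)
  have a1133 := E1 (.inl 0) (.inr 0)
  have a32 := E1 (.inl 0) (.inl 1)
  have a34 := E1 (.inl 0) (.inr 1)
  have a12 := E2 (.inl 0) (.inr 1)
  have a42 := E2 (.inr 1) (.inr 1)
  have a2244 := E2 (.inl 1) (.inr 1)
  have a43 := E2 (.inl 1) (.inr 0)
  have a14 := E3 (.inl 0) (.inl 1)
  have a24 := E3 (.inl 1) (.inl 1)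
  have a23 := E3 (.inr 1) (.inr 0)
  have a1122 := E4 (.inl 0) (.inl 1)
  simp [Esp, Matrix.mul_apply, Fintype.sum_sum_type, Fin.sum_univ_two, Matrix.single,
    Matrix.one_apply, Matrix.add_apply, Matrix.sub_apply] at a21 a41 a31 a1133 a32 a34 a12 a42 a2244 a43 a14 a24 a23 a1122
  have e := congrFun (congrFun hg (.inl 0)) (.inr 0)
  simp [Matrix.J, Matrix.mul_apply, Fintype.sum_sum_type, Fin.sum_univ_two,
    Matrix.fromBlocks, Matrix.transpose_apply, Matrix.one_apply] at e
  set ω := g (.inl 0) (.inl 0) with hω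
  have hω2 : ω ^ 2 = 1 := by
    have h33 : g (Sum.inr 0) (Sum.inr 0) = ω := by linear_combination -a1133
    rw [a31, a32, a34, h33] at e
    linear_combination -e
  refine ⟨ω, ω * g (.inl 0) (.inr 0), hω2, ?_⟩
  ext i j
  have h33 : g (Sum.inr 0) (Sum.inr 0) = ω := by linear_combination -a1133
  have h22 : g (Sum.inl 1) (Sum.inl 1) = ω := by linear_combination -a1122
  have h44 : g (Sum.inr 1) (Sum.inr 1) = ω := by linear_combination -a2244 - a1122
  rcases i with i | i <;> rcases j with j | j <;> fin_cases i <;> fin_cases j <;>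
    simp [Esp, Matrix.single, Matrix.one_apply, Matrix.add_apply, Matrix.smul_apply,
      smul_eq_mul, ← hω, h33, h22, h44, a21, a41, a31, a32, a34, a12, a42, a43, a14, a24, a23] <;>
    linear_combination (-(g (.inl 0) (.inr 0))) * hω2
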